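/- For Δ ≥ 5, the uniquely restricted chromatic index of C_Δ ∨ I_2 equals 2Δ, while χ'_ur(C_4 ∨ I_2) = 12 = 2·4 + 4. -/

import Mathlib

namespace SSE

open SimpleGraph

variable {V : Type*} {W : Type*}

/-- The set of vertices covered by a set of edges. -/
def cov (M : Set (Sym2 V)) : Set V := {v | ∃ e ∈ M, v ∈ e}

/-- `M` is a matching of `G`: a set of pairwise disjoint edges of `G`. -/
def IsMatchingSet (G : SimpleGraph V) (M : Set (Sym2 V)) : Prop :=
  M ⊆ G.edgeSet ∧ ∀ e ∈ M, ∀ f ∈ M, e ≠ f → ∀ v : V, v ∈ e → v ∉ f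

/-- `v` is a pendant vertex (degree 1) of the subgraph `G_M` of `G` induced by
the vertices covered by `M`. -/
def PendantIn (G : SimpleGraph V) (M : Set (Sym2 V)) (v : V) : Prop :=
  v ∈ cov M ∧ ∃! u, u ∈ cov M ∧ G.Adj v u

/-- `M` is an induced (strong) matching of `G`: every vertex of `G_M` is pendant in `G_M`. -/
def IsInducedMatching (G : SimpleGraph V) (M : Set (Sym2 V)) : Prop :=
  IsMatchingSet G M ∧ ∀ v ∈ cov M, PendantIn G M v

/-- `M` is a semistrong matching of `G`: every edge of `M` is a pendant edge of `G_M`. -/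
def IsSemistrongMatching (G : SimpleGraph V) (M : Set (Sym2 V)) : Prop :=
  IsMatchingSet G M ∧ ∀ e ∈ M, ∃ v, v ∈ e ∧ PendantIn G M v

/-- `N` is a perfect matching of the subgraph of `G` induced by `S`. -/
def IsPerfectMatchingOn (G : SimpleGraph V) (S : Set V) (N : Set (Sym2 V)) : Prop :=
  IsMatchingSet G N ∧ (∀ e ∈ N, ∀ v : V, v ∈ e → v ∈ S) ∧ cov N = S

/-- `M` is a uniquely restricted matching of `G`: it is the unique perfect matching
of the subgraph induced by the vertices it covers. -/
def IsUniquelyRestrictedMatching (G : SimpleGraph V) (M : Set (Sym2 V)) : Prop :=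
  IsMatchingSet G M ∧ ∀ N : Set (Sym2 V), IsPerfectMatchingOn G (cov M) N → N = M

/-- An edge coloring of `G` with colors `< k` each of whose color classes satisfies `P`. -/
def IsPColoring (G : SimpleGraph V) (P : SimpleGraph V → Set (Sym2 V) → Prop)
    (c : Sym2 V → ℕ) (k : ℕ) : Prop :=
  (∀ e ∈ G.edgeSet, c e < k) ∧ ∀ i : ℕ, P G {e | e ∈ G.edgeSet ∧ c e = i}

/-- The least number of colors in an edge coloring of `G` whose color classes satisfy `P`. -/
noncomputable def pIndex (G : SimpleGraph V)
    (P : SimpleGraph V → Set (Sym2 V) → Prop) : ℕ :=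
  sInf {k | ∃ c, IsPColoring G P c k}

/-- The chromatic index. -/
noncomputable def chromIndex (G : SimpleGraph V) : ℕ := pIndex G IsMatchingSet

/-- The uniquely restricted chromatic index. -/
noncomputable def urIndex (G : SimpleGraph V) : ℕ := pIndex G IsUniquelyRestrictedMatching

/-- The semistrong chromatic index. -/
noncomputable def ssIndex (G : SimpleGraph V) : ℕ := pIndex G IsSemistrongMatching

/-- The strong chromatic index. -/
noncomputable def strongIndex (G : SimpleGraph V) : ℕ := pIndex G IsInducedMatching

/-- The degree of a vertex. -/
noncomputable def natDeg (G : SimpleGraph V) (v : V) : ℕ := (G.neighborSet v).ncard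

/-- The maximum average degree of `G` is (strictly) less than `q`:
every nonempty (induced) subgraph has average degree `< q`. -/
def MadLT (G : SimpleGraph V) (q : ℚ) : Prop :=
  ∀ s : Set V, s.Finite → s.Nonempty →
    (2 * ({e ∈ G.edgeSet | ∀ v ∈ e, v ∈ s}.ncard : ℚ)) < q * s.ncard

/-- `K` is a minor of `G` (branch-set formulation). -/
def HasMinor (G : SimpleGraph V) (K : SimpleGraph W) : Prop :=
  ∃ B : W → Set V, (∀ w, (B w).Nonempty) ∧
    (∀ w, (G.induce (B w)).Connected) ∧
    (Pairwise fun w w' => Disjoint (B w) (B w')) ∧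
    (∀ w w', K.Adj w w' → ∃ u ∈ B w, ∃ v ∈ B w', G.Adj u v)

/-- `G` is planar (by Wagner's theorem: no `K₅` minor and no `K₃,₃` minor). -/
def IsPlanar (G : SimpleGraph V) : Prop :=
  ¬ HasMinor G (completeGraph (Fin 5)) ∧
  ¬ HasMinor G (completeBipartiteGraph (Fin 3) (Fin 3))

/-- The join `C_Δ ∨ I_2` of a cycle on `Δ` vertices with an independent set of 2 vertices. -/
def joinCI (n : ℕ) : SimpleGraph (Fin n ⊕ Fin 2) :=
  SimpleGraph.fromRel (fun x y =>
    match x, y with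
    | Sum.inl a, Sum.inl b => (SimpleGraph.cycleGraph n).Adj a b
    | Sum.inl _, Sum.inr _ => True
    | _, _ => False)

/-- `G` contains an `M`-alternating cycle: a cycle whose edges alternate between
edges in `M` and edges not in `M` (cyclically). -/
def HasAlternatingCycle (G : SimpleGraph V) (M : Set (Sym2 V)) : Prop :=
  ∃ (v : V) (c : G.Walk v v), c.IsCycle ∧
    List.Chain' (fun e f => ¬(e ∈ M ↔ f ∈ M)) c.edges ∧
    ∀ e ∈ c.edges.head?, ∀ f ∈ c.edges.getLast?, ¬(e ∈ M ↔ f ∈ M)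

/-- Edges `e` and `f` lie together on a cycle of length 4 in `G`. -/
def OnCommonC4 (G : SimpleGraph V) (e f : Sym2 V) : Prop :=
  ∃ (v : V) (c : G.Walk v v), c.IsCycle ∧ c.length = 4 ∧ e ∈ c.edges ∧ f ∈ c.edges

open Fin.CommRing



-- helper: in a matching, edges sharing a vertex are equal
lemma IsMatchingSet.eq_of_mem {G : SimpleGraph V} {M : Set (Sym2 V)}
    (hM : IsMatchingSet G M) {e f : Sym2 V} (he : e ∈ M) (hf : f ∈ M)
    {v : V} (hv : v ∈ e) (hv' : v ∈ f) : e = f := by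
  by_contra hne
  exact hM.2 e he f hf hne v hv hv'

lemma cov_empty : cov (∅ : Set (Sym2 V)) = ∅ := by
  ext v; simp [cov]

lemma mem_cov_of_mem {M : Set (Sym2 V)} {e : Sym2 V} (he : e ∈ M) {v : V}
    (hv : v ∈ e) : v ∈ cov M := ⟨e, he, hv⟩

lemma ur_empty (G : SimpleGraph V) :
    IsUniquelyRestrictedMatching G (∅ : Set (Sym2 V)) := by
  refine ⟨⟨Set.empty_subset _, by simp⟩, ?_⟩
  intro N hN
  ext e
  simp only [Set.mem_empty_iff_false, iff_false]
  intro he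
  induction e with
  | h x y =>
    have := hN.2.1 _ he x (by simp)
    rw [cov_empty] at this
    exact this

lemma ur_single (G : SimpleGraph V) {x y : V} (hxy : G.Adj x y) :
    IsUniquelyRestrictedMatching G {s(x,y)} := by
  have hne : x ≠ y := hxy.ne
  refine ⟨⟨by simp [hxy], by simp⟩, ?_⟩
  intro N hN
  obtain ⟨⟨hNG, hNd⟩, hNS, hNcov⟩ := hN
  have hcov : cov {s(x,y)} = {x, y} := by
    ext v; simp [cov]
  rw [hcov] at hNS hNcov
  ext e
  simp only [Set.mem_singleton_iff]
  constructor
  · intro he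
    induction e with
    | h a b =>
      have ha : a ∈ ({x, y} : Set V) := hNS _ he a (by simp)
      have hb : b ∈ ({x, y} : Set V) := hNS _ he b (by simp)
      have hab : a ≠ b := (hNG he).ne
      rcases ha with ha | ha <;> rcases hb with hb | hb <;>
        simp_all [Sym2.eq_swap, Sym2.eq_iff]
  · intro he
    subst he
    have hx : x ∈ cov N := by rw [hNcov]; simp
    obtain ⟨f, hf, hxf⟩ := hx
    induction f with
    | h a b =>
      have ha : a ∈ ({x, y} : Set V) := hNS _ hf a (by simp)
      have hb : b ∈ ({x, y} : Set V) := hNS _ hf b (by simp)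
      have hab : a ≠ b := (hNG hf).ne
      have : s(a, b) = s(x,y) := by
        rcases ha with ha | ha <;> rcases hb with hb | hb <;>
          simp_all [Sym2.eq_swap, Sym2.eq_iff]
      rwa [this] at hf

lemma ur_pair (G : SimpleGraph V) {p q r t : V}
    (hpq : G.Adj p q) (hrt : G.Adj r t)
    (hpr : p ≠ r) (hpt : p ≠ t) (hqr : q ≠ r) (hqt : q ≠ t)
    (haqr : ¬ G.Adj q r) (haqt : ¬ G.Adj q t) :
    IsUniquelyRestrictedMatching G {s(p,q), s(r,t)} := by
  have hpq' := hpq.ne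
  have hrt' := hrt.ne
  have hef : s(p,q) ≠ s(r,t) := by
    simp [Sym2.eq_iff]
    tauto
  have hcov : cov {s(p,q), s(r,t)} = {p, q, r, t} := by
    ext v; simp [cov]; tauto
  constructor
  · constructor
    · intro e he
      rcases he with he | he <;> simp_all
    · rintro e (rfl | rfl) f (rfl | rfl) hne v hv hv' <;>
        first
        | exact absurd rfl hne
        | (rw [Sym2.mem_iff] at hv hv'
           rcases hv with rfl | rfl <;> rcases hv' with rfl | rfl <;> simp_all)
  · intro N hN
    obtain ⟨⟨hNG, hNd⟩, hNS, hNcov⟩ := hN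
    have hNm : IsMatchingSet G N := ⟨hNG, hNd⟩
    rw [hcov] at hNS hNcov
    -- step 1 : s(p,q) ∈ N
    have hq : q ∈ cov N := by rw [hNcov]; simp
    obtain ⟨f, hf, hqf⟩ := hq
    obtain ⟨w, rfl⟩ := Sym2.mem_iff_exists.mp hqf
    have hadj : G.Adj q w := hNG hf
    have hw : w ∈ ({p, q, r, t} : Set V) := hNS _ hf w (by simp)
    have hwp : w = p := by
      rcases hw with h | h | h | h
      · exact h
      · exact absurd h.symm hadj.ne
      · exact absurd (h ▸ hadj) haqr
      · exact absurd (h ▸ hadj) haqt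
    rw [hwp, Sym2.eq_swap] at hf
    -- step 2 : s(r,t) ∈ N
    have hr : r ∈ cov N := by rw [hNcov]; simp
    obtain ⟨g, hg, hrg⟩ := hr
    obtain ⟨w, rfl⟩ := Sym2.mem_iff_exists.mp hrg
    have hadj2 : G.Adj r w := hNG hg
    have hw2 : w ∈ ({p, q, r, t} : Set V) := hNS _ hg w (by simp)
    have hwt : w = t := by
      rcases hw2 with h | h | h | h
      · exfalso
        have hg' : s(r, p) ∈ N := h ▸ hg
        have hgf : s(r, p) = s(p, q) := hNm.eq_of_mem (v := p) hg' hf (by simp) (by simp)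
        simp [Sym2.eq_iff] at hgf
        tauto
      · exfalso
        have : G.Adj r q := h ▸ hadj2
        exact haqr this.symm
      · exact absurd h.symm hadj2.ne
      · exact h
    rw [hwt] at hg
    -- step 3 : N ⊆ {s(p,q), s(r,t)}
    ext e
    constructor
    · intro he
      induction e with
      | h a b =>
        have ha : a ∈ ({p, q, r, t} : Set V) := hNS _ he a (by simp)
        rcases ha with h | h | h | h
        · have : s(a, b) = s(p, q) :=
            hNm.eq_of_mem (v := a) he hf (by simp) (by rw [h]; simp)
          rw [this]; simp
        · have : s(a, b) = s(p, q) :=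
            hNm.eq_of_mem (v := a) he hf (by simp) (by rw [h]; simp)
          rw [this]; simp
        · have : s(a, b) = s(r, t) :=
            hNm.eq_of_mem (v := a) he hg (by simp) (by rw [h]; simp)
          rw [this]; simp
        · have : s(a, b) = s(r, t) :=
            hNm.eq_of_mem (v := a) he hg (by simp) (by rw [h]; simp)
          rw [this]; simp
    · intro he
      rcases he with he | he <;> subst he <;> assumption

lemma not_ur_of_swap (G : SimpleGraph V) {M : Set (Sym2 V)} {p q r t : V}
    (he : s(p,q) ∈ M) (hf : s(r,t) ∈ M)
    (hpr : p ≠ r) (hpt : p ≠ t) (hqr : q ≠ r) (hqt : q ≠ t)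
    (haqr : G.Adj q r) (hatp : G.Adj t p) :
    ¬ IsUniquelyRestrictedMatching G M := by
  rintro ⟨hM, hU⟩
  have hpq : p ≠ q := (hM.1 he).ne
  have hrt : r ≠ t := (hM.1 hf).ne
  have hef : s(p,q) ≠ s(r,t) := by simp [Sym2.eq_iff]; tauto
  set N : Set (Sym2 V) := (M \ {s(p,q), s(r,t)}) ∪ {s(q,r), s(t,p)} with hNdef
  have hqrM : s(q,r) ∉ M := by
    intro h
    have : s(q,r) = s(p,q) := hM.eq_of_mem (v := q) h he (by simp) (by simp)
    simp [Sym2.eq_iff] at this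
    tauto
  have hmemN : ∀ u : Sym2 V, u ∈ N ↔ (u ∈ M ∧ u ≠ s(p,q) ∧ u ≠ s(r,t)) ∨ u = s(q,r) ∨ u = s(t,p) := by
    intro u; simp [hNdef, and_assoc]; tauto
  -- each vertex of {p,q,r,t} not in other M edges
  have hother : ∀ u ∈ M, u ≠ s(p,q) → u ≠ s(r,t) → ∀ v : V, v ∈ u → (v ≠ p ∧ v ≠ q ∧ v ≠ r ∧ v ≠ t) := by
    intro u hu h1 h2 v hv
    refine ⟨?_, ?_, ?_, ?_⟩ <;> rintro rfl
    · exact hM.2 u hu _ he h1 v hv (by simp)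
    · exact hM.2 u hu _ he h1 v hv (by simp)
    · exact hM.2 u hu _ hf h2 v hv (by simp)
    · exact hM.2 u hu _ hf h2 v hv (by simp)
  have hNPerf : IsPerfectMatchingOn G (cov M) N := by
    refine ⟨⟨?_, ?_⟩, ?_, ?_⟩
    · intro u hu
      rw [hmemN] at hu
      rcases hu with ⟨h, _, _⟩ | rfl | rfl
      · exact hM.1 h
      · exact haqr
      · exact hatp
    · intro a ha b hb hab v hva hvb
      rw [hmemN] at ha hb
      rcases ha with ⟨ha, ha1, ha2⟩ | rfl | rfl <;> rcases hb with ⟨hb, hb1, hb2⟩ | rfl | rfl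
      · exact hM.2 a ha b hb hab v hva hvb
      · obtain ⟨h1, h2, h3, h4⟩ := hother a ha ha1 ha2 v hva
        rw [Sym2.mem_iff] at hvb; tauto
      · obtain ⟨h1, h2, h3, h4⟩ := hother a ha ha1 ha2 v hva
        rw [Sym2.mem_iff] at hvb; tauto
      · obtain ⟨h1, h2, h3, h4⟩ := hother b hb hb1 hb2 v hvb
        rw [Sym2.mem_iff] at hva; tauto
      · exact hab rfl |>.elim
      · rw [Sym2.mem_iff] at hva hvb; rcases hva with rfl | rfl <;> tauto
      · obtain ⟨h1, h2, h3, h4⟩ := hother b hb hb1 hb2 v hvb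
        rw [Sym2.mem_iff] at hva; tauto
      · rw [Sym2.mem_iff] at hva hvb; rcases hva with rfl | rfl <;> tauto
      · exact hab rfl |>.elim
    · intro u hu v hv
      rw [hmemN] at hu
      rcases hu with ⟨h, _, _⟩ | rfl | rfl
      · exact mem_cov_of_mem h hv
      · rw [Sym2.mem_iff] at hv
        rcases hv with rfl | rfl
        · exact mem_cov_of_mem he (by simp)
        · exact mem_cov_of_mem hf (by simp)
      · rw [Sym2.mem_iff] at hv
        rcases hv with rfl | rfl
        · exact mem_cov_of_mem hf (by simp)
        · exact mem_cov_of_mem he (by simp)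
    · ext v
      constructor
      · rintro ⟨u, hu, hv⟩
        rw [hmemN] at hu
        rcases hu with ⟨h, _, _⟩ | rfl | rfl
        · exact mem_cov_of_mem h hv
        · rw [Sym2.mem_iff] at hv
          rcases hv with rfl | rfl
          · exact mem_cov_of_mem he (by simp)
          · exact mem_cov_of_mem hf (by simp)
        · rw [Sym2.mem_iff] at hv
          rcases hv with rfl | rfl
          · exact mem_cov_of_mem hf (by simp)
          · exact mem_cov_of_mem he (by simp)
      · rintro ⟨u, hu, hv⟩
        by_cases h1 : u = s(p,q)
        · subst h1
          rw [Sym2.mem_iff] at hv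
          rcases hv with rfl | rfl
          · exact ⟨s(t,v), by rw [hmemN]; tauto, by simp⟩
          · exact ⟨s(v,r), by rw [hmemN]; tauto, by simp⟩
        · by_cases h2 : u = s(r,t)
          · subst h2
            rw [Sym2.mem_iff] at hv
            rcases hv with rfl | rfl
            · exact ⟨s(q,v), by rw [hmemN]; tauto, by simp⟩
            · exact ⟨s(v,p), by rw [hmemN]; tauto, by simp⟩
          · exact ⟨u, by rw [hmemN]; tauto, hv⟩
  have := hU N hNPerf
  have : s(q,r) ∈ M := by
    rw [← this, hmemN]; tauto
  exact hqrM this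

-- nat mod helper
lemma mod_small_cases (x q : ℕ) (hq : 0 < q) (h : x < 2*q) : x % q = x ∨ x % q = x - q := by
  rcases Nat.lt_or_ge x q with h' | h'
  · left; exact Nat.mod_eq_of_lt h'
  · right; rw [Nat.mod_eq_sub_mod h', Nat.mod_eq_of_lt (by omega)]

section arith
variable {n : ℕ}

lemma val_sub (a b : Fin (n+5)) : (a - b).val = (n + 5 - b.val + a.val) % (n+5) := by
  rw [Fin.sub_def]

lemma val_add (a b : Fin (n+5)) : (a + b).val = (a.val + b.val) % (n+5) := by
  rw [Fin.add_def]

lemma val_cast (k : ℕ) (hk : k < n+5) : ((k : ℕ) : Fin (n+5)).val = k := by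
  rw [Fin.val_natCast]; exact Nat.mod_eq_of_lt hk

-- (a + 3) for a : Fin (n+5)
lemma val_add3 (a : Fin (n+5)) : (a + ((3:ℕ) : Fin (n+5))).val = (a.val + 3) % (n+5) := by
  rw [val_add, val_cast 3 (by omega)]

lemma val_add1 (a : Fin (n+5)) : (a + ((1:ℕ) : Fin (n+5))).val = (a.val + 1) % (n+5) := by
  rw [val_add, val_cast 1 (by omega)]

lemma sub_add1 (a : Fin (n+5)) : ((a + ((1:ℕ) : Fin (n+5))) - a).val = 1 := by
  have : a + ((1:ℕ) : Fin (n+5)) - a = ((1:ℕ) : Fin (n+5)) := by ring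
  rw [this, val_cast 1 (by omega)]

lemma one_of_sub_val_one {a b : Fin (n+5)} (h : (b - a).val = 1) :
    b = a + ((1:ℕ) : Fin (n+5)) := by
  have h1 : b - a = ((1:ℕ) : Fin (n+5)) := by
    apply Fin.ext; rw [h, val_cast 1 (by omega)]
  have : a + (b - a) = b := by ring
  rw [← this, h1]

lemma not_both_sub_one {a b : Fin (n+5)} (h1 : (b - a).val = 1) : (a - b).val ≠ 1 := by
  intro h2
  have : ((b - a) + (a - b)).val = 0 := by
    have : (b - a) + (a - b) = 0 := by ring
    rw [this]; rfl
  rw [val_add, h1, h2, Nat.mod_eq_of_lt (by omega)] at this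
  omega

end arith

lemma val_neg_cast (k : ℕ) (h1 : 0 < k) (h2 : k < n + 5) :
    ((0 : Fin (n+5)) - ((k:ℕ) : Fin (n+5))).val = n + 5 - k := by
  rw [val_sub, Fin.val_natCast, Fin.val_zero, Nat.mod_eq_of_lt (show k < n+5 by omega),
    Nat.mod_eq_of_lt (by omega)]
  omega

lemma joinCI_adj_ll {n : ℕ} {a b : Fin n} :
    (joinCI n).Adj (Sum.inl a) (Sum.inl b) ↔ (cycleGraph n).Adj a b := by
  simp only [joinCI, fromRel_adj, ne_eq, Sum.inl.injEq]
  constructor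
  · rintro ⟨h1, h2 | h2⟩
    · exact h2
    · exact h2.symm
  · intro h
    exact ⟨h.ne, Or.inl h⟩

lemma joinCI_adj_lr {n : ℕ} {a : Fin n} {u : Fin 2} :
    (joinCI n).Adj (Sum.inl a) (Sum.inr u) := by
  simp [joinCI, fromRel_adj]

lemma joinCI_adj_rl {n : ℕ} {a : Fin n} {u : Fin 2} :
    (joinCI n).Adj (Sum.inr u) (Sum.inl a) := joinCI_adj_lr.symm

lemma joinCI_adj_rr {n : ℕ} {u v : Fin 2} :
    ¬ (joinCI n).Adj (Sum.inr u) (Sum.inr v) := by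
  simp [joinCI, fromRel_adj]

lemma joinCI_edge_cases {n : ℕ} {e : Sym2 (Fin n ⊕ Fin 2)}
    (he : e ∈ (joinCI n).edgeSet) :
    (∃ i j : Fin n, e = s(Sum.inl i, Sum.inl j) ∧ (cycleGraph n).Adj i j) ∨
    (∃ (u : Fin 2) (i : Fin n), e = s(Sum.inr u, Sum.inl i)) := by
  induction e with
  | h x y =>
    rw [mem_edgeSet] at he
    match x, y with
    | Sum.inl i, Sum.inl j =>
      exact Or.inl ⟨i, j, rfl, joinCI_adj_ll.mp he⟩
    | Sum.inl i, Sum.inr u =>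
      exact Or.inr ⟨u, i, Sym2.eq_swap⟩
    | Sum.inr u, Sum.inl i =>
      exact Or.inr ⟨u, i, rfl⟩
    | Sum.inr u, Sum.inr v =>
      exact absurd he joinCI_adj_rr

def gB (n : ℕ) : (Fin (n+5) ⊕ Fin 2) → (Fin (n+5) ⊕ Fin 2) → ℕ
  | Sum.inl i, Sum.inl j =>
      if (j - i).val = 1 then (i + ((3:ℕ) : Fin (n+5))).val
      else if (i - j).val = 1 then (j + ((3:ℕ) : Fin (n+5))).val
      else 0
  | Sum.inl i, Sum.inr u => if u = 0 then i.val else (n+5) + i.val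
  | Sum.inr u, Sum.inl i => if u = 0 then i.val else (n+5) + i.val
  | Sum.inr _, Sum.inr _ => 0

lemma gB_symm (n : ℕ) : ∀ x y, gB n x y = gB n y x := by
  rintro (i | u) (j | v)
  · simp only [gB]
    by_cases h1 : (j - i).val = 1
    · have h2 := not_both_sub_one h1
      simp [h1, h2]
    · by_cases h2 : (i - j).val = 1
      · simp [h1, h2]
      · simp [h1, h2]
  · rfl
  · rfl
  · rfl

def cB (n : ℕ) : Sym2 (Fin (n+5) ⊕ Fin 2) → ℕ := Sym2.lift ⟨gB n, gB_symm n⟩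

lemma cB_mk (n : ℕ) (x y : Fin (n+5) ⊕ Fin 2) : cB n s(x, y) = gB n x y := rfl

section big
variable {n : ℕ}

lemma cB_lt {e : Sym2 (Fin (n+5) ⊕ Fin 2)} (he : e ∈ (joinCI (n+5)).edgeSet) :
    cB n e < 2 * (n+5) := by
  rcases joinCI_edge_cases he with ⟨x, y, rfl, hadj⟩ | ⟨u, x, rfl⟩
  · rw [cB_mk]
    show (if (y - x).val = 1 then _ else if (x - y).val = 1 then _ else 0) < _
    split
    · exact lt_of_lt_of_le (x + _).isLt (by omega)
    · split
      · exact lt_of_lt_of_le (y + _).isLt (by omega)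
      · omega
  · rw [cB_mk]
    show (if u = 0 then x.val else (n+5) + x.val) < _
    split
    · exact lt_of_lt_of_le x.isLt (by omega)
    · have := x.isLt; omega

lemma classB_small (i : ℕ) (hi : i < n+5) :
    {e | e ∈ (joinCI (n+5)).edgeSet ∧ cB n e = i} =
      ({s(Sum.inr 0, Sum.inl (⟨i, hi⟩ : Fin (n+5))),
        s(Sum.inl ((⟨i, hi⟩ : Fin (n+5)) - ((3:ℕ) : Fin (n+5))),
          Sum.inl ((⟨i, hi⟩ : Fin (n+5)) - ((3:ℕ) : Fin (n+5)) + ((1:ℕ) : Fin (n+5))))} :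
        Set (Sym2 (Fin (n+5) ⊕ Fin 2))) := by
  set a : Fin (n+5) := ⟨i, hi⟩ with ha
  set b : Fin (n+5) := a - ((3:ℕ) : Fin (n+5)) with hb
  have hba : b + ((3:ℕ) : Fin (n+5)) = a := by rw [hb]; ring
  ext e
  simp only [Set.mem_setOf_eq, Set.mem_insert_iff, Set.mem_singleton_iff]
  constructor
  · rintro ⟨he, hc⟩
    rcases joinCI_edge_cases he with ⟨x, y, rfl, hadj⟩ | ⟨u, x, rfl⟩
    · right
      rw [cB_mk] at hc
      rw [cycleGraph_adj'] at hadj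
      rcases hadj with h | h
      · -- (x - y).val = 1, so x = y + 1
        have hxy := one_of_sub_val_one h
        have h2 := not_both_sub_one h
        have hc' : (y + ((3:ℕ) : Fin (n+5))).val = i := by
          rw [show gB n (Sum.inl x) (Sum.inl y) =
            if (y - x).val = 1 then (x + ((3:ℕ) : Fin (n+5))).val
            else if (x - y).val = 1 then (y + ((3:ℕ) : Fin (n+5))).val else 0 from rfl,
            if_neg h2, if_pos h] at hc
          exact hc
        have hy : y = b := by
          have h5 : y + ((3:ℕ) : Fin (n+5)) = a := Fin.ext hc'
          rw [hb, ← h5]; ring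
        rw [hxy, hy, Sym2.eq_swap]
      · -- (y - x).val = 1, so y = x + 1
        have hxy := one_of_sub_val_one h
        have hc' : (x + ((3:ℕ) : Fin (n+5))).val = i := by
          rw [show gB n (Sum.inl x) (Sum.inl y) =
            if (y - x).val = 1 then (x + ((3:ℕ) : Fin (n+5))).val
            else if (x - y).val = 1 then (y + ((3:ℕ) : Fin (n+5))).val else 0 from rfl,
            if_pos h] at hc
          exact hc
        have hx : x = b := by
          have h5 : x + ((3:ℕ) : Fin (n+5)) = a := Fin.ext hc'
          rw [hb, ← h5]; ring
        rw [hxy, hx]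
    · left
      rw [cB_mk] at hc
      rw [show gB n (Sum.inr u) (Sum.inl x) =
        if u = 0 then x.val else (n+5) + x.val from rfl] at hc
      rcases ((by decide : ∀ v : Fin 2, v = 0 ∨ v = 1) u) with rfl | rfl
      · rw [if_pos rfl] at hc
        have : x = a := Fin.ext hc
        rw [this]
      · rw [if_neg (by decide)] at hc
        have := x.isLt
        omega
  · rintro (rfl | rfl)
    · refine ⟨(mem_edgeSet _).mpr joinCI_adj_rl, ?_⟩
      rw [cB_mk]
      rw [show gB n (Sum.inr 0) (Sum.inl a) = if (0 : Fin 2) = 0 then a.val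
        else (n+5) + a.val from rfl, if_pos rfl]
    · have hadj : (cycleGraph (n+5)).Adj b (b + ((1:ℕ) : Fin (n+5))) := by
        rw [cycleGraph_adj']
        right
        exact sub_add1 b
      refine ⟨(mem_edgeSet _).mpr (joinCI_adj_ll.mpr hadj), ?_⟩
      rw [cB_mk]
      rw [show gB n (Sum.inl b) (Sum.inl (b + ((1:ℕ) : Fin (n+5)))) =
        if ((b + ((1:ℕ) : Fin (n+5))) - b).val = 1 then (b + ((3:ℕ) : Fin (n+5))).val
        else if (b - (b + ((1:ℕ) : Fin (n+5)))).val = 1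
        then ((b + ((1:ℕ) : Fin (n+5))) + ((3:ℕ) : Fin (n+5))).val else 0 from rfl,
        if_pos (sub_add1 b), hba]

lemma classB_mid (i : ℕ) (hi1 : n+5 ≤ i) (hi2 : i < 2*(n+5)) :
    {e | e ∈ (joinCI (n+5)).edgeSet ∧ cB n e = i} =
      ({s(Sum.inr 1, Sum.inl (⟨i - (n+5), by omega⟩ : Fin (n+5)))} :
        Set (Sym2 (Fin (n+5) ⊕ Fin 2))) := by
  ext e
  simp only [Set.mem_setOf_eq, Set.mem_singleton_iff]
  constructor
  · rintro ⟨he, hc⟩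
    rcases joinCI_edge_cases he with ⟨x, y, rfl, hadj⟩ | ⟨u, x, rfl⟩
    · exfalso
      rw [cB_mk] at hc
      rw [cycleGraph_adj'] at hadj
      rw [show gB n (Sum.inl x) (Sum.inl y) =
        if (y - x).val = 1 then (x + ((3:ℕ) : Fin (n+5))).val
        else if (x - y).val = 1 then (y + ((3:ℕ) : Fin (n+5))).val else 0 from rfl] at hc
      rcases hadj with h | h
      · rw [if_neg (not_both_sub_one h), if_pos h] at hc
        have := (y + ((3:ℕ) : Fin (n+5))).isLt
        omega
      · rw [if_pos h] at hc
        have := (x + ((3:ℕ) : Fin (n+5))).isLt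
        omega
    · rw [cB_mk] at hc
      rw [show gB n (Sum.inr u) (Sum.inl x) =
        if u = 0 then x.val else (n+5) + x.val from rfl] at hc
      rcases ((by decide : ∀ v : Fin 2, v = 0 ∨ v = 1) u) with rfl | rfl
      · rw [if_pos rfl] at hc
        have := x.isLt
        omega
      · rw [if_neg (by decide)] at hc
        have : x = (⟨i - (n+5), by omega⟩ : Fin (n+5)) := by
          apply Fin.ext
          simp
          omega
        rw [this]
  · rintro rfl
    refine ⟨(mem_edgeSet _).mpr joinCI_adj_rl, ?_⟩
    rw [cB_mk]
    rw [show gB n (Sum.inr 1) (Sum.inl (⟨i - (n+5), by omega⟩ : Fin (n+5))) =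
      if (1 : Fin 2) = 0 then (⟨i - (n+5), by omega⟩ : Fin (n+5)).val
      else (n+5) + (⟨i - (n+5), by omega⟩ : Fin (n+5)).val from rfl,
      if_neg (by decide)]
    simp
    omega

lemma classB_large (i : ℕ) (hi : 2*(n+5) ≤ i) :
    {e | e ∈ (joinCI (n+5)).edgeSet ∧ cB n e = i} = ∅ := by
  ext e
  simp only [Set.mem_setOf_eq, Set.mem_empty_iff_false, iff_false, not_and]
  intro he hc
  have := cB_lt he
  omega

end big


section upperbig
variable {n : ℕ}

lemma upperB : IsPColoring (joinCI (n+5)) IsUniquelyRestrictedMatching (cB n) (2*(n+5)) := by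
  refine ⟨fun e he => cB_lt he, fun i => ?_⟩
  rcases Nat.lt_or_ge i (n+5) with hi | hi
  · rw [classB_small i hi]
    set a : Fin (n+5) := ⟨i, hi⟩ with ha
    set b : Fin (n+5) := a - ((3:ℕ) : Fin (n+5)) with hb
    have hab : a - b = ((3:ℕ) : Fin (n+5)) := by rw [hb]; ring
    have hba : b - a = (0 : Fin (n+5)) - ((3:ℕ) : Fin (n+5)) := by rw [hb]; ring
    have hab1 : a - (b + ((1:ℕ) : Fin (n+5))) = ((2:ℕ) : Fin (n+5)) := by
      rw [hb]; push_cast; ring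
    have hba1 : (b + ((1:ℕ) : Fin (n+5))) - a = (0 : Fin (n+5)) - ((2:ℕ) : Fin (n+5)) := by
      rw [hb]; push_cast; ring
    have hv3 : (a - b).val = 3 := by rw [hab, val_cast 3 (by omega)]
    have hv2 : (a - (b + ((1:ℕ) : Fin (n+5)))).val = 2 := by rw [hab1, val_cast 2 (by omega)]
    have hw3 : (b - a).val = n + 2 := by rw [hba, val_neg_cast 3 (by omega) (by omega)]; omega
    have hw2 : ((b + ((1:ℕ) : Fin (n+5))) - a).val = n + 3 := by
      rw [hba1, val_neg_cast 2 (by omega) (by omega)]; omega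
    apply ur_pair (p := Sum.inr 0) (q := Sum.inl a) (r := Sum.inl b)
      (t := Sum.inl (b + ((1:ℕ) : Fin (n+5))))
    · exact joinCI_adj_rl
    · rw [joinCI_adj_ll, cycleGraph_adj']
      right
      exact sub_add1 b
    · simp
    · simp
    · intro h
      rw [Sum.inl.injEq] at h
      rw [h, sub_self] at hab
      have := congrArg Fin.val hab
      rw [Fin.val_zero, val_cast 3 (by omega)] at this
      omega
    · intro h
      rw [Sum.inl.injEq] at h
      rw [h, sub_self] at hab1
      have := congrArg Fin.val hab1
      rw [Fin.val_zero, val_cast 2 (by omega)] at this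
      omega
    · rw [joinCI_adj_ll, cycleGraph_adj', hv3, hw3]
      omega
    · rw [joinCI_adj_ll, cycleGraph_adj', hv2, hw2]
      omega
  · rcases Nat.lt_or_ge i (2*(n+5)) with hi2 | hi2
    · rw [classB_mid i hi hi2]
      exact ur_single _ joinCI_adj_rl
    · rw [classB_large i hi2]
      exact ur_empty _

end upperbig


section lowerbig
variable {n : ℕ}

lemma lowerB {k : ℕ} {c : Sym2 (Fin (n+5) ⊕ Fin 2) → ℕ}
    (h : IsPColoring (joinCI (n+5)) IsUniquelyRestrictedMatching c k) :
    2*(n+5) ≤ k := by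
  have hedge : ∀ (u : Fin 2) (i : Fin (n+5)),
      s(Sum.inr u, Sum.inl i) ∈ (joinCI (n+5)).edgeSet :=
    fun u i => (mem_edgeSet _).mpr joinCI_adj_rl
  set φ : Fin 2 × Fin (n+5) → Fin k :=
    fun p => ⟨c s(Sum.inr p.1, Sum.inl p.2), h.1 _ (hedge p.1 p.2)⟩ with hφ
  have hinj : Function.Injective φ := by
    rintro ⟨u, i⟩ ⟨u', i'⟩ heq
    by_contra hne
    rw [Prod.mk.injEq, not_and_or] at hne
    have heq' : c s(Sum.inr u, Sum.inl i) = c s(Sum.inr u', Sum.inl i') :=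
      congrArg Fin.val heq
    set m := c s(Sum.inr u, Sum.inl i) with hm
    have hM := h.2 m
    have he1 : s(Sum.inr u, Sum.inl i) ∈
        {e | e ∈ (joinCI (n+5)).edgeSet ∧ c e = m} := ⟨hedge u i, rfl⟩
    have he2 : s(Sum.inr u', Sum.inl i') ∈
        {e | e ∈ (joinCI (n+5)).edgeSet ∧ c e = m} := ⟨hedge u' i', heq'.symm⟩
    by_cases huu : u = u'
    · subst huu
      have hii : i ≠ i' := by
        rcases hne with h' | h'
        · exact absurd rfl h'
        · exact h'
      have hnee : s(Sum.inr u, Sum.inl i) ≠ s(Sum.inr u, Sum.inl i') := by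
        simp [Sym2.eq_iff, hii]
      exact hM.1.2 _ he1 _ he2 hnee (Sum.inr u) (by simp) (by simp)
    · by_cases hii : i = i'
      · subst hii
        have hnee : s(Sum.inr u, Sum.inl i) ≠ s(Sum.inr u', Sum.inl i) := by
          simp [Sym2.eq_iff, huu]
        exact hM.1.2 _ he1 _ he2 hnee (Sum.inl i) (by simp) (by simp)
      · exact not_ur_of_swap (joinCI (n+5)) (p := Sum.inr u) (q := Sum.inl i)
          (r := Sum.inr u') (t := Sum.inl i') he1 he2
          (by simp [huu]) (by simp) (by simp) (by simp [hii])
          joinCI_adj_lr joinCI_adj_lr hM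
  have := Fintype.card_le_of_injective φ hinj
  simpa using this

lemma urIndex_big : urIndex (joinCI (n+5)) = 2*(n+5) := by
  rw [urIndex, pIndex]
  apply le_antisymm
  · exact Nat.sInf_le ⟨cB n, upperB⟩
  · refine le_csInf ⟨2*(n+5), ⟨cB n, upperB⟩⟩ ?_
    rintro k ⟨c, hc⟩
    exact lowerB hc

end lowerbig


section four

def g4 : (Fin 4 ⊕ Fin 2) → (Fin 4 ⊕ Fin 2) → ℕ
  | Sum.inl i, Sum.inl j =>
      if (j - i).val = 1 then 8 + i.val
      else if (i - j).val = 1 then 8 + j.val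
      else 0
  | Sum.inl i, Sum.inr u => if u = 0 then i.val else 4 + i.val
  | Sum.inr u, Sum.inl i => if u = 0 then i.val else 4 + i.val
  | Sum.inr _, Sum.inr _ => 0

lemma g4_symm : ∀ x y, g4 x y = g4 y x := by decide

def c4 : Sym2 (Fin 4 ⊕ Fin 2) → ℕ := Sym2.lift ⟨g4, g4_symm⟩

lemma c4_mk (x y : Fin 4 ⊕ Fin 2) : c4 s(x, y) = g4 x y := rfl

lemma sub_one4 {a b : Fin 4} (h : (b - a).val = 1) : b = a + ((1:ℕ) : Fin 4) :=
  (by decide : ∀ a b : Fin 4, (b - a).val = 1 → b = a + ((1:ℕ) : Fin 4)) a b h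

lemma not_both4 {a b : Fin 4} (h : (b - a).val = 1) : (a - b).val ≠ 1 :=
  (by decide : ∀ a b : Fin 4, (b - a).val = 1 → (a - b).val ≠ 1) a b h

lemma sub_add14 (a : Fin 4) : ((a + ((1:ℕ) : Fin 4)) - a).val = 1 :=
  (by decide : ∀ a : Fin 4, ((a + ((1:ℕ) : Fin 4)) - a).val = 1) a

lemma cycle4_adj (a : Fin 4) : (cycleGraph 4).Adj a (a + ((1:ℕ) : Fin 4)) := by
  rw [cycleGraph_adj']
  right
  exact sub_add14 a

lemma c4_lt {e : Sym2 (Fin 4 ⊕ Fin 2)} (he : e ∈ (joinCI 4).edgeSet) :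
    c4 e < 12 := by
  rcases joinCI_edge_cases he with ⟨x, y, rfl, hadj⟩ | ⟨u, x, rfl⟩
  · rw [c4_mk]
    show (if (y - x).val = 1 then 8 + x.val else if (x - y).val = 1 then 8 + y.val else 0) < 12
    have := x.isLt
    have := y.isLt
    split
    · omega
    · split <;> omega
  · rw [c4_mk]
    show (if u = 0 then x.val else 4 + x.val) < 12
    have := x.isLt
    split <;> omega

lemma class4_a (i : ℕ) (hi : i < 4) :
    {e | e ∈ (joinCI 4).edgeSet ∧ c4 e = i} =
      ({s(Sum.inr 0, Sum.inl (⟨i, hi⟩ : Fin 4))} : Set (Sym2 (Fin 4 ⊕ Fin 2))) := by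
  ext e
  simp only [Set.mem_setOf_eq, Set.mem_singleton_iff]
  constructor
  · rintro ⟨he, hc⟩
    rcases joinCI_edge_cases he with ⟨x, y, rfl, hadj⟩ | ⟨u, x, rfl⟩
    · exfalso
      rw [c4_mk] at hc
      rw [cycleGraph_adj'] at hadj
      rw [show g4 (Sum.inl x) (Sum.inl y) =
        if (y - x).val = 1 then 8 + x.val else if (x - y).val = 1 then 8 + y.val else 0
        from rfl] at hc
      rcases hadj with h | h
      · rw [if_neg (not_both4 h), if_pos h] at hc
        omega
      · rw [if_pos h] at hc
        omega
    · rw [c4_mk] at hc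
      rw [show g4 (Sum.inr u) (Sum.inl x) = if u = 0 then x.val else 4 + x.val from rfl] at hc
      rcases ((by decide : ∀ v : Fin 2, v = 0 ∨ v = 1) u) with rfl | rfl
      · rw [if_pos rfl] at hc
        have : x = (⟨i, hi⟩ : Fin 4) := Fin.ext hc
        rw [this]
      · rw [if_neg (by decide)] at hc
        have := x.isLt
        omega
  · rintro rfl
    refine ⟨(mem_edgeSet _).mpr joinCI_adj_rl, ?_⟩
    rw [c4_mk]
    rw [show g4 (Sum.inr 0) (Sum.inl (⟨i, hi⟩ : Fin 4)) =
      if (0 : Fin 2) = 0 then (⟨i, hi⟩ : Fin 4).val else 4 + (⟨i, hi⟩ : Fin 4).val from rfl,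
      if_pos rfl]

lemma class4_b (i : ℕ) (hi1 : 4 ≤ i) (hi2 : i < 8) :
    {e | e ∈ (joinCI 4).edgeSet ∧ c4 e = i} =
      ({s(Sum.inr 1, Sum.inl (⟨i - 4, by omega⟩ : Fin 4))} : Set (Sym2 (Fin 4 ⊕ Fin 2))) := by
  ext e
  simp only [Set.mem_setOf_eq, Set.mem_singleton_iff]
  constructor
  · rintro ⟨he, hc⟩
    rcases joinCI_edge_cases he with ⟨x, y, rfl, hadj⟩ | ⟨u, x, rfl⟩
    · exfalso
      rw [c4_mk] at hc
      rw [cycleGraph_adj'] at hadj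
      rw [show g4 (Sum.inl x) (Sum.inl y) =
        if (y - x).val = 1 then 8 + x.val else if (x - y).val = 1 then 8 + y.val else 0
        from rfl] at hc
      rcases hadj with h | h
      · rw [if_neg (not_both4 h), if_pos h] at hc
        omega
      · rw [if_pos h] at hc
        omega
    · rw [c4_mk] at hc
      rw [show g4 (Sum.inr u) (Sum.inl x) = if u = 0 then x.val else 4 + x.val from rfl] at hc
      rcases ((by decide : ∀ v : Fin 2, v = 0 ∨ v = 1) u) with rfl | rfl
      · rw [if_pos rfl] at hc
        have := x.isLt
        omega
      · rw [if_neg (by decide)] at hc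
        have : x = (⟨i - 4, by omega⟩ : Fin 4) := by
          apply Fin.ext
          simp
          omega
        rw [this]
  · rintro rfl
    refine ⟨(mem_edgeSet _).mpr joinCI_adj_rl, ?_⟩
    rw [c4_mk]
    rw [show g4 (Sum.inr 1) (Sum.inl (⟨i - 4, by omega⟩ : Fin 4)) =
      if (1 : Fin 2) = 0 then (⟨i - 4, by omega⟩ : Fin 4).val
      else 4 + (⟨i - 4, by omega⟩ : Fin 4).val from rfl, if_neg (by decide)]
    simp
    omega

lemma class4_c (i : ℕ) (hi1 : 8 ≤ i) (hi2 : i < 12) :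
    {e | e ∈ (joinCI 4).edgeSet ∧ c4 e = i} =
      ({s(Sum.inl (⟨i - 8, by omega⟩ : Fin 4),
         Sum.inl ((⟨i - 8, by omega⟩ : Fin 4) + ((1:ℕ) : Fin 4)))} :
        Set (Sym2 (Fin 4 ⊕ Fin 2))) := by
  set b : Fin 4 := ⟨i - 8, by omega⟩ with hb
  ext e
  simp only [Set.mem_setOf_eq, Set.mem_singleton_iff]
  constructor
  · rintro ⟨he, hc⟩
    rcases joinCI_edge_cases he with ⟨x, y, rfl, hadj⟩ | ⟨u, x, rfl⟩
    · rw [c4_mk] at hc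
      rw [cycleGraph_adj'] at hadj
      rw [show g4 (Sum.inl x) (Sum.inl y) =
        if (y - x).val = 1 then 8 + x.val else if (x - y).val = 1 then 8 + y.val else 0
        from rfl] at hc
      rcases hadj with h | h
      · rw [if_neg (not_both4 h), if_pos h] at hc
        have hy : y = b := by
          apply Fin.ext
          rw [hb]
          simp
          omega
        have hx : x = y + ((1:ℕ) : Fin 4) := sub_one4 h
        rw [hx, hy, Sym2.eq_swap]
      · rw [if_pos h] at hc
        have hx : x = b := by
          apply Fin.ext
          rw [hb]
          simp
          omega
        have hy : y = x + ((1:ℕ) : Fin 4) := sub_one4 h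
        rw [hy, hx]
    · exfalso
      rw [c4_mk] at hc
      rw [show g4 (Sum.inr u) (Sum.inl x) = if u = 0 then x.val else 4 + x.val from rfl] at hc
      have := x.isLt
      rcases ((by decide : ∀ v : Fin 2, v = 0 ∨ v = 1) u) with rfl | rfl
      · rw [if_pos rfl] at hc
        omega
      · rw [if_neg (by decide)] at hc
        omega
  · rintro rfl
    refine ⟨(mem_edgeSet _).mpr (joinCI_adj_ll.mpr (cycle4_adj b)), ?_⟩
    rw [c4_mk]
    rw [show g4 (Sum.inl b) (Sum.inl (b + ((1:ℕ) : Fin 4))) =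
      if ((b + ((1:ℕ) : Fin 4)) - b).val = 1 then 8 + b.val
      else if (b - (b + ((1:ℕ) : Fin 4))).val = 1 then 8 + (b + ((1:ℕ) : Fin 4)).val else 0
      from rfl, if_pos (sub_add14 b)]
    rw [hb]
    simp
    omega

lemma class4_d (i : ℕ) (hi : 12 ≤ i) :
    {e | e ∈ (joinCI 4).edgeSet ∧ c4 e = i} = ∅ := by
  ext e
  simp only [Set.mem_setOf_eq, Set.mem_empty_iff_false, iff_false, not_and]
  intro he hc
  have := c4_lt he
  omega

lemma upper4 : IsPColoring (joinCI 4) IsUniquelyRestrictedMatching c4 12 := by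
  refine ⟨fun e he => c4_lt he, fun i => ?_⟩
  rcases Nat.lt_or_ge i 4 with hi | hi
  · rw [class4_a i hi]
    exact ur_single _ joinCI_adj_rl
  · rcases Nat.lt_or_ge i 8 with hi2 | hi2
    · rw [class4_b i hi hi2]
      exact ur_single _ joinCI_adj_rl
    · rcases Nat.lt_or_ge i 12 with hi3 | hi3
      · rw [class4_c i hi2 hi3]
        exact ur_single _ (joinCI_adj_ll.mpr (cycle4_adj _))
      · rw [class4_d i hi3]
        exact ur_empty _

end four


section lower4

lemma adj4' {a b : Fin 4} (h : (b - a).val = 1 ∨ (a - b).val = 1) :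
    (joinCI 4).Adj (Sum.inl a) (Sum.inl b) := by
  rw [joinCI_adj_ll, cycleGraph_adj']
  tauto

lemma f4cases (i j : Fin 4) :
    i = j ∨ i = j + ((1:ℕ):Fin 4) ∨ i = j + ((2:ℕ):Fin 4) ∨ i = j + ((3:ℕ):Fin 4) := by
  revert i j; decide

lemma fd21 : ∀ j : Fin 4, j + ((2:ℕ):Fin 4) ≠ j + ((1:ℕ):Fin 4) := by decide
lemma fd20 : ∀ j : Fin 4, j + ((2:ℕ):Fin 4) ≠ j := by decide
lemma fd30 : ∀ j : Fin 4, j + ((3:ℕ):Fin 4) ≠ j := by decide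
lemma fd31 : ∀ j : Fin 4, j + ((3:ℕ):Fin 4) ≠ j + ((1:ℕ):Fin 4) := by decide
lemma fd02 : ∀ j : Fin 4, j ≠ j + ((2:ℕ):Fin 4) := by decide
lemma fd021 : ∀ j : Fin 4, j ≠ j + ((2:ℕ):Fin 4) + ((1:ℕ):Fin 4) := by decide
lemma fd121 : ∀ j : Fin 4, j + ((1:ℕ):Fin 4) ≠ j + ((2:ℕ):Fin 4) := by decide
lemma fd1221 : ∀ j : Fin 4, j + ((1:ℕ):Fin 4) ≠ j + ((2:ℕ):Fin 4) + ((1:ℕ):Fin 4) := by decide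
lemma fa12 : ∀ j : Fin 4, ((j + ((1:ℕ):Fin 4)) - (j + ((2:ℕ):Fin 4))).val = 1 ∨
    ((j + ((2:ℕ):Fin 4)) - (j + ((1:ℕ):Fin 4))).val = 1 := by decide
lemma fa21 : ∀ j : Fin 4, ((j + ((2:ℕ):Fin 4)) - (j + ((1:ℕ):Fin 4))).val = 1 ∨
    ((j + ((1:ℕ):Fin 4)) - (j + ((2:ℕ):Fin 4))).val = 1 := by decide
lemma fa03 : ∀ j : Fin 4, (j - (j + ((3:ℕ):Fin 4))).val = 1 ∨
    ((j + ((3:ℕ):Fin 4)) - j).val = 1 := by decide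
lemma fa021 : ∀ j : Fin 4, (j - (j + ((2:ℕ):Fin 4) + ((1:ℕ):Fin 4))).val = 1 ∨
    ((j + ((2:ℕ):Fin 4) + ((1:ℕ):Fin 4)) - j).val = 1 := by decide
lemma fmem3 : ∀ j : Fin 4, Sum.inl j ∈
    (s(Sum.inl (j + ((3:ℕ):Fin 4)), Sum.inl (j + ((3:ℕ):Fin 4) + ((1:ℕ):Fin 4))) :
      Sym2 (Fin 4 ⊕ Fin 2)) := by decide

-- conflict between an apex edge and a cycle edge in the same UR class
lemma conflict_ac {M : Set (Sym2 (Fin 4 ⊕ Fin 2))}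
    (hM : IsUniquelyRestrictedMatching (joinCI 4) M)
    {u : Fin 2} {i j : Fin 4}
    (he : s(Sum.inr u, Sum.inl i) ∈ M)
    (hf : s(Sum.inl j, Sum.inl (j + ((1:ℕ):Fin 4))) ∈ M) : False := by
  have hef : s(Sum.inr u, Sum.inl i) ≠ s(Sum.inl j, Sum.inl (j + ((1:ℕ):Fin 4))) := by
    simp [Sym2.eq_iff]
  rcases f4cases i j with rfl | hij | hij | hij
  · exact hM.1.2 _ he _ hf hef (Sum.inl i) (by simp) (by simp)
  · exact hM.1.2 _ he _ hf hef (Sum.inl i) (by simp) (by rw [hij]; simp)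
  · subst hij
    have hf' : s(Sum.inl (j + ((1:ℕ):Fin 4)), Sum.inl j) ∈ M := by
      rw [Sym2.eq_swap]; exact hf
    exact not_ur_of_swap (joinCI 4) (p := Sum.inr u) (q := Sum.inl (j + ((2:ℕ):Fin 4)))
      (r := Sum.inl (j + ((1:ℕ):Fin 4))) (t := Sum.inl j) he hf'
      (by simp) (by simp)
      (by simp only [ne_eq, Sum.inl.injEq]; exact fd21 j)
      (by simp only [ne_eq, Sum.inl.injEq]; exact fd20 j)
      (adj4' (fa12 j)) joinCI_adj_lr hM
  · subst hij
    exact not_ur_of_swap (joinCI 4) (p := Sum.inr u) (q := Sum.inl (j + ((3:ℕ):Fin 4)))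
      (r := Sum.inl j) (t := Sum.inl (j + ((1:ℕ):Fin 4))) he hf
      (by simp) (by simp)
      (by simp only [ne_eq, Sum.inl.injEq]; exact fd30 j)
      (by simp only [ne_eq, Sum.inl.injEq]; exact fd31 j)
      (adj4' (fa03 j)) joinCI_adj_lr hM

-- conflict between two apex edges in the same UR class
lemma conflict_aa {M : Set (Sym2 (Fin 4 ⊕ Fin 2))}
    (hM : IsUniquelyRestrictedMatching (joinCI 4) M)
    {u u' : Fin 2} {i i' : Fin 4} (hne : (u, i) ≠ (u', i'))
    (he : s(Sum.inr u, Sum.inl i) ∈ M)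
    (hf : s(Sum.inr u', Sum.inl i') ∈ M) : False := by
  rw [ne_eq, Prod.mk.injEq, not_and_or] at hne
  by_cases huu : u = u'
  · subst huu
    have hii : i ≠ i' := by
      rcases hne with h' | h'
      · exact absurd rfl h'
      · exact h'
    have hnee : s(Sum.inr u, Sum.inl i) ≠ s(Sum.inr u, Sum.inl i') := by
      simp [Sym2.eq_iff, hii]
    exact hM.1.2 _ he _ hf hnee (Sum.inr u) (by simp) (by simp)
  · by_cases hii : i = i'
    · subst hii
      have hnee : s(Sum.inr u, Sum.inl i) ≠ s(Sum.inr u', Sum.inl i) := by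
        simp [Sym2.eq_iff, huu]
      exact hM.1.2 _ he _ hf hnee (Sum.inl i) (by simp) (by simp)
    · exact not_ur_of_swap (joinCI 4) (p := Sum.inr u) (q := Sum.inl i)
        (r := Sum.inr u') (t := Sum.inl i') he hf
        (by simp [huu]) (by simp) (by simp) (by simp [hii])
        joinCI_adj_lr joinCI_adj_lr hM

-- conflict between two distinct cycle edges in the same UR class
lemma conflict_cc {M : Set (Sym2 (Fin 4 ⊕ Fin 2))}
    (hM : IsUniquelyRestrictedMatching (joinCI 4) M)
    {j j' : Fin 4} (hne : j ≠ j')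
    (he : s(Sum.inl j, Sum.inl (j + ((1:ℕ):Fin 4))) ∈ M)
    (hf : s(Sum.inl j', Sum.inl (j' + ((1:ℕ):Fin 4))) ∈ M) : False := by
  have hnedge : ∀ a b : Fin 4, a ≠ b →
      s(Sum.inl a, Sum.inl (a + ((1:ℕ):Fin 4))) ≠
        (s(Sum.inl b, Sum.inl (b + ((1:ℕ):Fin 4))) : Sym2 (Fin 4 ⊕ Fin 2)) := by
    decide
  rcases f4cases j' j with rfl | hjj | hjj | hjj
  · exact hne rfl
  · exact hM.1.2 _ he _ hf (hnedge j j' hne) (Sum.inl (j + ((1:ℕ):Fin 4)))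
      (by simp) (by rw [hjj]; simp)
  · subst hjj
    exact not_ur_of_swap (joinCI 4) (p := Sum.inl j) (q := Sum.inl (j + ((1:ℕ):Fin 4)))
      (r := Sum.inl (j + ((2:ℕ):Fin 4)))
      (t := Sum.inl (j + ((2:ℕ):Fin 4) + ((1:ℕ):Fin 4))) he hf
      (by simp only [ne_eq, Sum.inl.injEq]; exact fd02 j)
      (by simp only [ne_eq, Sum.inl.injEq]; exact fd021 j)
      (by simp only [ne_eq, Sum.inl.injEq]; exact fd121 j)
      (by simp only [ne_eq, Sum.inl.injEq]; exact fd1221 j)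
      (adj4' (fa21 j)) (adj4' (fa021 j)) hM
  · exact hM.1.2 _ he _ hf (hnedge j j' hne) (Sum.inl j)
      (by simp) (by rw [hjj]; exact fmem3 j)

def E4 : (Fin 2 × Fin 4) ⊕ Fin 4 → Sym2 (Fin 4 ⊕ Fin 2)
  | Sum.inl (u, i) => s(Sum.inr u, Sum.inl i)
  | Sum.inr j => s(Sum.inl j, Sum.inl (j + ((1:ℕ):Fin 4)))

lemma E4_mem (x : (Fin 2 × Fin 4) ⊕ Fin 4) : E4 x ∈ (joinCI 4).edgeSet := by
  match x with
  | Sum.inl (u, i) => exact (mem_edgeSet _).mpr joinCI_adj_rl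
  | Sum.inr j => exact (mem_edgeSet _).mpr (joinCI_adj_ll.mpr (cycle4_adj j))

lemma lower4 {k : ℕ} {c : Sym2 (Fin 4 ⊕ Fin 2) → ℕ}
    (h : IsPColoring (joinCI 4) IsUniquelyRestrictedMatching c k) : 12 ≤ k := by
  set φ : (Fin 2 × Fin 4) ⊕ Fin 4 → Fin k :=
    fun x => ⟨c (E4 x), h.1 _ (E4_mem x)⟩ with hφ
  have hinj : Function.Injective φ := by
    intro x x' heq
    by_contra hne
    have heq' : c (E4 x) = c (E4 x') := congrArg Fin.val heq
    set m := c (E4 x) with hm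
    have hM := h.2 m
    have he1 : E4 x ∈ {e | e ∈ (joinCI 4).edgeSet ∧ c e = m} := ⟨E4_mem x, rfl⟩
    have he2 : E4 x' ∈ {e | e ∈ (joinCI 4).edgeSet ∧ c e = m} := ⟨E4_mem x', heq'.symm⟩
    match x, x' with
    | Sum.inl (u, i), Sum.inl (u', i') =>
      exact conflict_aa hM (fun hp => hne (by rw [hp])) he1 he2
    | Sum.inl (u, i), Sum.inr j =>
      exact conflict_ac hM he1 he2
    | Sum.inr j, Sum.inl (u, i) =>
      exact conflict_ac hM he2 he1
    | Sum.inr j, Sum.inr j' =>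
      exact conflict_cc hM (fun hp => hne (by rw [hp])) he1 he2
  have := Fintype.card_le_of_injective φ hinj
  simpa using this

lemma urIndex_four : urIndex (joinCI 4) = 12 := by
  rw [urIndex, pIndex]
  apply le_antisymm
  · exact Nat.sInf_le ⟨c4, upper4⟩
  · refine le_csInf ⟨12, ⟨c4, upper4⟩⟩ ?_
    rintro k ⟨c, hc⟩
    exact lower4 hc

end lower4


/-- For `Δ ≥ 5`, `χ'_ur(C_Δ ∨ I_2) = 2Δ`, while `χ'_ur(C_4 ∨ I_2) = 12 = 2·4+4`. -/
theorem urIndex_joinCI :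
    (∀ Δ : ℕ, 5 ≤ Δ → urIndex (joinCI Δ) = 2 * Δ) ∧
    urIndex (joinCI 4) = 12 := by
  constructor
  · intro Δ hΔ
    obtain ⟨n, rfl⟩ : ∃ n, Δ = n + 5 := ⟨Δ - 5, by omega⟩
    exact urIndex_big
  · exact urIndex_four

end SSE
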